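/- The NRF pair internally stabilizes the augmented plant (part (III) of the proof of Theorem 3): Let (M, N, M̃, Ñ, X, Y, X̃, Ỹ) be a DCF of the p×m matrix G over RatFunc ℝ, let Q be an m×p matrix with X_Q := X + Q·M̃ and Y_Q := Y − Q·Ñ, assume Y_Q and Y_Q^diag are invertible, and define Φ := I_m − (Y_Q^diag)⁻¹·Y_Q and Γ := (Y_Q^diag)⁻¹·X_Q. Then I_m − Φ is invertible, the matrix I_m + (I_m − Φ)⁻¹·Γ·G is invertible, and (I_m + (I_m − Φ)⁻¹·Γ·G)⁻¹·(I_m − Φ)⁻¹ = M·Y_Q^diag; consequently (I_m + (I_m − Φ)⁻¹·Γ·G)⁻¹·(I_m − Φ)⁻¹·[I_m, Φ, Γ] = M·[Y_Q^diag, Y_Q^diag − Y_Q, X_Q]. If in addition all eight DCF matrices and Q are stable, then the matrices M·Y_Q^diag, M·(Y_Q^diag − Y_Q), M·X_Q, N·Y_Q^diag, N·(Y_Q^diag − Y_Q), and N·X_Q are all stable. -/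

import Mathlib

open Matrix Polynomial

noncomputable section

/-- A rational function is stable if every complex root of the image in `ℂ[X]`
of its reduced denominator has negative real part. -/
def RFStable (f : RatFunc ℝ) : Prop :=
  ∀ z : ℂ, aeval z f.denom = 0 → z.re < 0

/-- A matrix over `RatFunc ℝ` is stable if all of its entries are stable. -/
def MatStable {a b : Type*} (G : Matrix a b (RatFunc ℝ)) : Prop :=
  ∀ i j, RFStable (G i j)

lemma RFStable_of_denom_one {f : RatFunc ℝ} (h : f.denom = 1) : RFStable f := by
  intro z hz
  rw [h] at hz
  simp at hz

lemma RFStable_zero : RFStable (0 : RatFunc ℝ) :=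
  RFStable_of_denom_one (by simp [RatFunc.denom_zero])

lemma RFStable_of_dvd {f : RatFunc ℝ} {q : Polynomial ℝ}
    (hd : f.denom ∣ q) (hq : ∀ z : ℂ, aeval z q = 0 → z.re < 0) : RFStable f := by
  intro z hz
  obtain ⟨c, hc⟩ := hd
  exact hq z (by rw [hc, _root_.map_mul, hz, zero_mul])

lemma RFStable.add {f g : RatFunc ℝ} (hf : RFStable f) (hg : RFStable g) :
    RFStable (f + g) := by
  refine RFStable_of_dvd (RatFunc.denom_add_dvd f g) ?_
  intro z hz
  rw [_root_.map_mul, mul_eq_zero] at hz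
  rcases hz with h | h
  · exact hf z h
  · exact hg z h

lemma RFStable.mul {f g : RatFunc ℝ} (hf : RFStable f) (hg : RFStable g) :
    RFStable (f * g) := by
  refine RFStable_of_dvd (RatFunc.denom_mul_dvd f g) ?_
  intro z hz
  rw [_root_.map_mul, mul_eq_zero] at hz
  rcases hz with h | h
  · exact hf z h
  · exact hg z h

lemma RFStable.neg {f : RatFunc ℝ} (hf : RFStable f) : RFStable (-f) := by
  have : (-f) = (-1 : RatFunc ℝ) * f := by ring
  rw [this]
  refine RFStable.mul ?_ hf
  refine RFStable_of_denom_one ?_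
  have : (-1 : RatFunc ℝ) = algebraMap (Polynomial ℝ) (RatFunc ℝ) (-1) := by simp
  rw [this, RatFunc.denom_algebraMap]

lemma RFStable.sub {f g : RatFunc ℝ} (hf : RFStable f) (hg : RFStable g) :
    RFStable (f - g) := by
  rw [sub_eq_add_neg]; exact hf.add hg.neg

lemma RFStable_sum {ι : Type*} {s : Finset ι} {f : ι → RatFunc ℝ}
    (h : ∀ i ∈ s, RFStable (f i)) : RFStable (∑ i ∈ s, f i) := by
  classical
  induction s using Finset.induction with
  | empty => simpa using RFStable_zero
  | @insert a s hi ih =>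
    rw [Finset.sum_insert hi]
    exact (h _ (Finset.mem_insert_self _ _)).add
      (ih fun i hmem => h i (Finset.mem_insert_of_mem hmem))

lemma MatStable.mul {a b c : Type*} [Fintype b]
    {A : Matrix a b (RatFunc ℝ)} {B : Matrix b c (RatFunc ℝ)}
    (hA : MatStable A) (hB : MatStable B) : MatStable (A * B) := by
  intro i j
  rw [Matrix.mul_apply]
  exact RFStable_sum fun k _ => (hA i k).mul (hB k j)

lemma MatStable.add {a b : Type*} {A B : Matrix a b (RatFunc ℝ)}
    (hA : MatStable A) (hB : MatStable B) : MatStable (A + B) :=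
  fun i j => (hA i j).add (hB i j)

lemma MatStable.sub {a b : Type*} {A B : Matrix a b (RatFunc ℝ)}
    (hA : MatStable A) (hB : MatStable B) : MatStable (A - B) :=
  fun i j => (hA i j).sub (hB i j)

lemma MatStable.diag {n : Type*} [DecidableEq n] {A : Matrix n n (RatFunc ℝ)}
    (hA : MatStable A) : MatStable (Matrix.diagonal fun i => A i i) := by
  intro i j
  by_cases h : i = j
  · subst h; simpa using hA i i
  · simp [Matrix.diagonal_apply_ne _ h]
    exact RFStable_zero

/-- **The NRF pair internally stabilizes the augmented plant (part (III) of the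
proof of Theorem 3).** -/
theorem nrf_stabilizes_augmented_plant {m p : ℕ}
    (G : Matrix (Fin p) (Fin m) (RatFunc ℝ))
    (M : Matrix (Fin m) (Fin m) (RatFunc ℝ)) (N : Matrix (Fin p) (Fin m) (RatFunc ℝ))
    (Mt : Matrix (Fin p) (Fin p) (RatFunc ℝ)) (Nt : Matrix (Fin p) (Fin m) (RatFunc ℝ))
    (X : Matrix (Fin m) (Fin p) (RatFunc ℝ)) (Y : Matrix (Fin m) (Fin m) (RatFunc ℝ))
    (Xt : Matrix (Fin m) (Fin p) (RatFunc ℝ)) (Yt : Matrix (Fin p) (Fin p) (RatFunc ℝ))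
    (hMinv : IsUnit M) (hMtinv : IsUnit Mt)
    (hGr : G = N * M⁻¹) (hGl : G = Mt⁻¹ * Nt)
    (hBez : Matrix.fromBlocks Y X (-Nt) Mt * Matrix.fromBlocks M (-Xt) N Yt = 1)
    (Q : Matrix (Fin m) (Fin p) (RatFunc ℝ))
    (XQ : Matrix (Fin m) (Fin p) (RatFunc ℝ)) (hXQ : XQ = X + Q * Mt)
    (YQ : Matrix (Fin m) (Fin m) (RatFunc ℝ)) (hYQ : YQ = Y - Q * Nt)
    (hYQinv : IsUnit YQ)
    (Ydiag : Matrix (Fin m) (Fin m) (RatFunc ℝ))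
    (hYdiag : Ydiag = Matrix.diagonal fun i => YQ i i)
    (hYdiagInv : IsUnit Ydiag)
    (Φ : Matrix (Fin m) (Fin m) (RatFunc ℝ)) (hΦ : Φ = 1 - Ydiag⁻¹ * YQ)
    (Γ : Matrix (Fin m) (Fin p) (RatFunc ℝ)) (hΓ : Γ = Ydiag⁻¹ * XQ) :
    IsUnit (1 - Φ) ∧
    IsUnit (1 + (1 - Φ)⁻¹ * Γ * G) ∧
    (1 + (1 - Φ)⁻¹ * Γ * G)⁻¹ * (1 - Φ)⁻¹ = M * Ydiag ∧
    (1 + (1 - Φ)⁻¹ * Γ * G)⁻¹ * (1 - Φ)⁻¹ *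
        Matrix.fromCols (Matrix.fromCols 1 Φ) Γ =
      M * Matrix.fromCols (Matrix.fromCols Ydiag (Ydiag - YQ)) XQ ∧
    ((MatStable M ∧ MatStable N ∧ MatStable Mt ∧ MatStable Nt ∧
      MatStable X ∧ MatStable Y ∧ MatStable Xt ∧ MatStable Yt ∧ MatStable Q) →
     (MatStable (M * Ydiag) ∧ MatStable (M * (Ydiag - YQ)) ∧ MatStable (M * XQ) ∧
      MatStable (N * Ydiag) ∧ MatStable (N * (Ydiag - YQ)) ∧ MatStable (N * XQ))) := by
  classical
  have hMd : IsUnit M.det := (Matrix.isUnit_iff_isUnit_det M).mp hMinv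
  have hYQd : IsUnit YQ.det := (Matrix.isUnit_iff_isUnit_det _).mp hYQinv
  have hDd : IsUnit Ydiag.det := (Matrix.isUnit_iff_isUnit_det _).mp hYdiagInv
  have hDinv : Ydiag * Ydiag⁻¹ = 1 := Matrix.mul_nonsing_inv _ hDd
  have hOneSub : (1 : Matrix (Fin m) (Fin m) (RatFunc ℝ)) - Φ = Ydiag⁻¹ * YQ := by
    rw [hΦ, sub_sub_cancel]
  have hu1 : IsUnit (1 - Φ) := by
    rw [hOneSub, Matrix.isUnit_iff_isUnit_det, Matrix.det_mul]
    exact (Matrix.isUnit_nonsing_inv_det _ hDd).mul hYQd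
  have hinv1 : (1 - Φ)⁻¹ = YQ⁻¹ * Ydiag := by
    rw [hOneSub, Matrix.mul_inv_rev, Matrix.nonsing_inv_nonsing_inv _ hDd]
  -- Bézout block identities
  rw [← Matrix.fromBlocks_one, Matrix.fromBlocks_multiply] at hBez
  have h11 : Y * M + X * N = 1 := by
    have h := congrArg Matrix.toBlocks₁₁ hBez
    rwa [Matrix.toBlocks_fromBlocks₁₁, Matrix.toBlocks_fromBlocks₁₁] at h
  have h21' : -Nt * M + Mt * N = 0 := by
    have h := congrArg Matrix.toBlocks₂₁ hBez
    rwa [Matrix.toBlocks_fromBlocks₂₁, Matrix.toBlocks_fromBlocks₂₁] at h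
  have h21 : Mt * N = Nt * M := by
    have h := add_eq_zero_iff_neg_eq.mp h21'
    rw [Matrix.neg_mul, neg_neg] at h
    exact h.symm
  -- key identity
  have hGM : G * M = N := by
    rw [hGr, Matrix.mul_assoc, Matrix.nonsing_inv_mul _ hMd, Matrix.mul_one]
  have hstep : (YQ + XQ * G) * M = 1 := by
    rw [Matrix.add_mul, Matrix.mul_assoc XQ G M, hGM, hYQ, hXQ,
      Matrix.sub_mul, Matrix.add_mul, Matrix.mul_assoc Q Nt M,
      Matrix.mul_assoc Q Mt N, h21, ← h11]
    abel
  have hKey : M⁻¹ = YQ + XQ * G := Matrix.inv_eq_left_inv hstep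
  have hE : 1 + (1 - Φ)⁻¹ * Γ * G = YQ⁻¹ * M⁻¹ := by
    have hmid : YQ⁻¹ * Ydiag * (Ydiag⁻¹ * XQ) = YQ⁻¹ * XQ := by
      rw [Matrix.mul_assoc YQ⁻¹, ← Matrix.mul_assoc Ydiag, hDinv, Matrix.one_mul]
    rw [hinv1, hΓ, hmid, hKey, Matrix.mul_add, Matrix.nonsing_inv_mul _ hYQd,
      Matrix.mul_assoc]
  have hMYQd : IsUnit (M * YQ).det := by rw [Matrix.det_mul]; exact hMd.mul hYQd
  have hu2 : IsUnit (1 + (1 - Φ)⁻¹ * Γ * G) := by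
    rw [hE, Matrix.isUnit_iff_isUnit_det, Matrix.det_mul]
    exact (Matrix.isUnit_nonsing_inv_det _ hYQd).mul (Matrix.isUnit_nonsing_inv_det _ hMd)
  have hinv2 : (1 + (1 - Φ)⁻¹ * Γ * G)⁻¹ = M * YQ := by
    rw [hE, ← Matrix.mul_inv_rev, Matrix.nonsing_inv_nonsing_inv _ hMYQd]
  have h3 : (1 + (1 - Φ)⁻¹ * Γ * G)⁻¹ * (1 - Φ)⁻¹ = M * Ydiag := by
    rw [hinv2, hinv1, Matrix.mul_assoc, ← Matrix.mul_assoc YQ,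
      Matrix.mul_nonsing_inv _ hYQd, Matrix.one_mul]
  have hDΦ : Ydiag * Φ = Ydiag - YQ := by
    rw [hΦ, Matrix.mul_sub, Matrix.mul_one, ← Matrix.mul_assoc, hDinv, Matrix.one_mul]
  have hDΓ : Ydiag * Γ = XQ := by
    rw [hΓ, ← Matrix.mul_assoc, hDinv, Matrix.one_mul]
  refine ⟨hu1, hu2, h3, ?_, ?_⟩
  · rw [h3, Matrix.mul_fromCols, Matrix.mul_fromCols, Matrix.mul_fromCols,
      Matrix.mul_fromCols, Matrix.mul_one, Matrix.mul_assoc M Ydiag Φ, hDΦ,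
      Matrix.mul_assoc M Ydiag Γ, hDΓ]
  · rintro ⟨hM, hN, hMt, hNt, hX, hY, hXt, hYt, hQ⟩
    have hYQst : MatStable YQ := hYQ ▸ hY.sub (hQ.mul hNt)
    have hXQst : MatStable XQ := hXQ ▸ hX.add (hQ.mul hMt)
    have hDst : MatStable Ydiag := hYdiag ▸ hYQst.diag
    exact ⟨hM.mul hDst, hM.mul (hDst.sub hYQst), hM.mul hXQst,
      hN.mul hDst, hN.mul (hDst.sub hYQst), hN.mul hXQst⟩
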